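/- Let A be an observable in a quasi-local algebra, and j, k two sites with localization estimates f_j(A, r) ≤ ε₁ and f_k(A, r) ≤ ε₂, where f_x(A,r) is the distance in norm from A to the subalgebra supported on the ball B_x(r). Let B be a best possible approximation of A in the subalgebra supported on B_j(r) ∩ B_k(r) (i.e., ‖A − B‖ = f_{B_j(r)∩B_k(r)}(A)). Then ‖A − B‖ ≤ ε₁ + ε₂ + min(ε₁, ε₂). -/
import Mathlib


/-- If `a` is `ε₁`-approximated on the ball `B_j(r)` and `ε₂`-approximated on `B_k(r)`
(in the sense of the localization seminorms `f X a = inf_{b ∈ S X} ‖a - b‖`), and `b` is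
a best possible approximation of `a` in the subalgebra of the intersection
`B_j(r) ∩ B_k(r)`, then `‖a - b‖ ≤ ε₁ + ε₂ + min ε₁ ε₂`.  Here `S X` are the local
subalgebras and `E X` the norm-non-increasing conditional expectations onto them. -/
theorem stmt_10 {d : ℕ} {A : Type*} [NormedRing A]
    (S : Set (EuclideanSpace ℝ (Fin d)) → Set A)
    (hS_mono : ∀ X Y : Set (EuclideanSpace ℝ (Fin d)), X ⊆ Y → S X ⊆ S Y)
    (hS_ne : ∀ X, (S X).Nonempty)
    (E : Set (EuclideanSpace ℝ (Fin d)) → A → A)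
    (hE_mem : ∀ X a, E X a ∈ S X)
    (hE_fix : ∀ X a, a ∈ S X → E X a = a)
    (hE_contr : ∀ X a b, ‖E X a - E X b‖ ≤ ‖a - b‖)
    (hE_loc : ∀ X Y a, a ∈ S Y → E X a ∈ S (X ∩ Y))
    (fApprox : Set (EuclideanSpace ℝ (Fin d)) → A → ℝ)
    (hf : ∀ X a, fApprox X a = sInf ((fun b => ‖a - b‖) '' S X))
    (j k : EuclideanSpace ℝ (Fin d)) (r : ℝ) (a b : A) (ε₁ ε₂ : ℝ)
    (h1 : fApprox (Metric.ball j r) a ≤ ε₁)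
    (h2 : fApprox (Metric.ball k r) a ≤ ε₂)
    (hb_mem : b ∈ S (Metric.ball j r ∩ Metric.ball k r))
    (hb_best : ‖a - b‖ = fApprox (Metric.ball j r ∩ Metric.ball k r) a) :
    ‖a - b‖ ≤ ε₁ + ε₂ + min ε₁ ε₂ := by
  -- bounded below by 0
  have hbdd : ∀ X : Set (EuclideanSpace ℝ (Fin d)),
      BddBelow ((fun b => ‖a - b‖) '' S X) := by
    intro X
    exact ⟨0, fun x hx => by
      rcases hx with ⟨c, _, rfl⟩; exact norm_nonneg _⟩
  -- near-optimal elements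
  have hnear : ∀ (X : Set (EuclideanSpace ℝ (Fin d))) (ε : ℝ),
      fApprox X a ≤ ε → ∀ δ > (0:ℝ), ∃ c ∈ S X, ‖a - c‖ < ε + δ := by
    intro X ε hε δ hδ
    obtain ⟨y, hy, hylt⟩ := Real.lt_sInf_add_pos
      ((hS_ne X).image (fun b => ‖a - b‖)) hδ
    rcases hy with ⟨c, hc, rfl⟩
    exact ⟨c, hc, by
      calc ‖a - c‖ < sInf ((fun b => ‖a - b‖) '' S X) + δ := hylt
        _ = fApprox X a + δ := by rw [hf]
        _ ≤ ε + δ := by linarith⟩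
  -- key: for any b₁ ∈ S(B_j), b₂ ∈ S(B_k), there is a triple bound
  have key : ∀ b₁ ∈ S (Metric.ball j r), ∀ b₂ ∈ S (Metric.ball k r),
      ‖a - b‖ ≤ 2 * ‖a - b₁‖ + ‖a - b₂‖ := by
    intro b₁ hb₁ b₂ hb₂
    set c := E (Metric.ball j r) b₂ with hc
    have hcmem : c ∈ S (Metric.ball j r ∩ Metric.ball k r) :=
      hE_loc _ _ _ hb₂
    have hab : ‖a - b‖ ≤ ‖a - c‖ := by
      rw [hb_best, hf]
      exact csInf_le (hbdd _) ⟨c, hcmem, rfl⟩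
    have h3 : ‖b₁ - c‖ ≤ ‖b₁ - b₂‖ := by
      have := hE_contr (Metric.ball j r) b₁ b₂
      rwa [hE_fix _ _ hb₁] at this
    calc ‖a - b‖ ≤ ‖a - c‖ := hab
      _ ≤ ‖a - b₁‖ + ‖b₁ - c‖ := by
          simpa using norm_sub_le_norm_sub_add_norm_sub a b₁ c
      _ ≤ ‖a - b₁‖ + ‖b₁ - b₂‖ := by linarith
      _ ≤ ‖a - b₁‖ + (‖b₁ - a‖ + ‖a - b₂‖) := by
          gcongr; simpa using norm_sub_le_norm_sub_add_norm_sub b₁ a b₂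
      _ = 2 * ‖a - b₁‖ + ‖a - b₂‖ := by rw [norm_sub_rev b₁ a]; ring
  -- symmetric key
  have key' : ∀ b₂ ∈ S (Metric.ball k r), ∀ b₁ ∈ S (Metric.ball j r),
      ‖a - b‖ ≤ 2 * ‖a - b₂‖ + ‖a - b₁‖ := by
    intro b₂ hb₂ b₁ hb₁
    set c := E (Metric.ball k r) b₁ with hc
    have hcmem : c ∈ S (Metric.ball j r ∩ Metric.ball k r) := by
      have := hE_loc (Metric.ball k r) (Metric.ball j r) b₁ hb₁
      rwa [Set.inter_comm] at this
    have hab : ‖a - b‖ ≤ ‖a - c‖ := by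
      rw [hb_best, hf]
      exact csInf_le (hbdd _) ⟨c, hcmem, rfl⟩
    have h3 : ‖b₂ - c‖ ≤ ‖b₂ - b₁‖ := by
      have := hE_contr (Metric.ball k r) b₂ b₁
      rwa [hE_fix _ _ hb₂] at this
    calc ‖a - b‖ ≤ ‖a - c‖ := hab
      _ ≤ ‖a - b₂‖ + ‖b₂ - c‖ := by
          simpa using norm_sub_le_norm_sub_add_norm_sub a b₂ c
      _ ≤ ‖a - b₂‖ + ‖b₂ - b₁‖ := by linarith
      _ ≤ ‖a - b₂‖ + (‖b₂ - a‖ + ‖a - b₁‖) := by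
          gcongr; simpa using norm_sub_le_norm_sub_add_norm_sub b₂ a b₁
      _ = 2 * ‖a - b₂‖ + ‖a - b₁‖ := by rw [norm_sub_rev b₂ a]; ring
  refine le_of_forall_pos_le_add fun ε hε => ?_
  have hδ : (0:ℝ) < ε / 3 := by linarith
  obtain ⟨b₁, hb₁, hb₁lt⟩ := hnear _ _ h1 (ε/3) hδ
  obtain ⟨b₂, hb₂, hb₂lt⟩ := hnear _ _ h2 (ε/3) hδ
  rcases min_cases ε₁ ε₂ with ⟨hm, hle⟩ | ⟨hm, hle⟩
  · have := key b₁ hb₁ b₂ hb₂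
    rw [hm]; linarith
  · have := key' b₂ hb₂ b₁ hb₁
    rw [hm]; linarith
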